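/- Let d ≥ 1, ρ > 0, and set γ = ρ/d. Let α = (1/2)μᵀ(σσᵀ)⁻¹μ, ζ = σ_Zηᵀσ⁻¹μ, κ ∈ [-1,1], σ_Z > 0, with σ ∈ ℝ^{d×d} invertible. Define v(y) = ln(1+y) + (1/ρ)(-(1/2)σ_Z²κ² + √(1-κ²)ζ + (γ/2)ln((2πγ)^d/|det(σσᵀ)|) + α) for y ≥ 0. Then v solves the exploratory HJB equation (1/2)σ_Z²κ²(y+1)²v''(y) + √(1-κ²)ζ(y+1)v'(y) + γ·ln(√(-(2πγ)^d/(|det(σσᵀ)|·(v''(y))^d))) - α(v'(y))²/v''(y) = ρv(y) for all y > 0, with Neumann boundary condition v'(0) = 1. -/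

import Mathlib

open Real Matrix

/-- With γ = ρ/d, the function
v(y) = ln(1+y) + (1/ρ)(-(1/2)σ_Z²κ² + √(1-κ²)ζ + (γ/2)ln((2πγ)^d/|det(σσᵀ)|) + α)
solves the exploratory HJB equation with Neumann boundary condition v'(0) = 1. -/
theorem explicit_solution_exploratory_HJB
    {d : ℕ} (hd : 1 ≤ d) (ρ γ σZ κ α ζ : ℝ) (μv η : Fin d → ℝ)
    (σ : Matrix (Fin d) (Fin d) ℝ) (hσ : IsUnit σ.det)
    (hρ : 0 < ρ) (hγ : γ = ρ / d) (hσZ : 0 < σZ) (hκ : κ ∈ Set.Icc (-1 : ℝ) 1)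
    (hα : α = (1 / 2) * (μv ⬝ᵥ ((σ * σᵀ)⁻¹ *ᵥ μv)))
    (hζ : ζ = σZ * (η ⬝ᵥ (σ⁻¹ *ᵥ μv)))
    (v v' v'' : ℝ → ℝ)
    (hv : ∀ y : ℝ, v y = Real.log (1 + y)
      + (1 / ρ) * (-(1 / 2) * σZ ^ 2 * κ ^ 2 + Real.sqrt (1 - κ ^ 2) * ζ
          + (γ / 2) * Real.log ((2 * π * γ) ^ d / |(σ * σᵀ).det|) + α))
    (hv' : ∀ y : ℝ, v' y = 1 / (1 + y))
    (hv'' : ∀ y : ℝ, v'' y = -(1 / (1 + y) ^ 2)) :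
    (∀ y ≥ (0 : ℝ), HasDerivAt v (v' y) y) ∧
    (∀ y ≥ (0 : ℝ), HasDerivAt v' (v'' y) y) ∧
    (∀ y > (0 : ℝ),
      (1 / 2) * σZ ^ 2 * κ ^ 2 * (y + 1) ^ 2 * v'' y
        + Real.sqrt (1 - κ ^ 2) * ζ * (y + 1) * v' y
        + γ * Real.log (Real.sqrt ((2 * π * γ) ^ d / (|(σ * σᵀ).det| * (-(v'' y)) ^ d)))
        - α * (v' y) ^ 2 / v'' y = ρ * v y) ∧
    v' 0 = 1 := by
  have hd0 : (0 : ℝ) < (d : ℝ) := by exact_mod_cast Nat.lt_of_lt_of_le Nat.zero_lt_one hd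
  have hγpos : 0 < γ := by rw [hγ]; positivity
  have hDpos : 0 < |(σ * σᵀ).det| := by
    rw [abs_pos, Matrix.det_mul, Matrix.det_transpose]
    exact mul_ne_zero hσ.ne_zero hσ.ne_zero
  have hγd : γ * d = ρ := by rw [hγ, div_mul_cancel₀ ρ hd0.ne']
  have hvf : v = fun y => Real.log (1 + y)
      + (1 / ρ) * (-(1 / 2) * σZ ^ 2 * κ ^ 2 + Real.sqrt (1 - κ ^ 2) * ζ
          + (γ / 2) * Real.log ((2 * π * γ) ^ d / |(σ * σᵀ).det|) + α) := funext hv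
  have hv'f : v' = fun y => 1 / (1 + y) := funext hv'
  refine ⟨?_, ?_, ?_, ?_⟩
  · intro y hy
    have h1 : (1 : ℝ) + y ≠ 0 := by linarith
    rw [hvf, hv']
    have h2 : HasDerivAt (fun y : ℝ => 1 + y) 1 y := by
      simpa using (hasDerivAt_id y).const_add (1 : ℝ)
    have := (h2.log h1).add_const ((1 / ρ) * (-(1 / 2) * σZ ^ 2 * κ ^ 2
      + Real.sqrt (1 - κ ^ 2) * ζ
      + (γ / 2) * Real.log ((2 * π * γ) ^ d / |(σ * σᵀ).det|) + α))
    simpa using this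
  · intro y hy
    have h1 : (1 : ℝ) + y ≠ 0 := by linarith
    rw [hv'f, hv'']
    have h2 : HasDerivAt (fun y : ℝ => 1 + y) 1 y := by
      simpa using (hasDerivAt_id y).const_add (1 : ℝ)
    have : HasDerivAt (fun y : ℝ => (1 + y)⁻¹) (-1 / (1 + y) ^ 2) y := h2.inv h1
    simp only [one_div]
    convert this using 1
    ring
  · intro y hy
    have h1 : (0 : ℝ) < 1 + y := by linarith
    have h1' : (1 : ℝ) + y ≠ 0 := ne_of_gt h1
    rw [hv, hv', hv'']
    have hneg : -(-(1 / (1 + y) ^ 2)) = ((1 + y) ^ 2)⁻¹ := by rw [neg_neg, one_div]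
    rw [hneg]
    have h2πγ : (0 : ℝ) < 2 * π * γ := by positivity
    have hxpos : (0 : ℝ) < (2 * π * γ) ^ d / (|(σ * σᵀ).det| * (((1 + y) ^ 2)⁻¹) ^ d) := by
      positivity
    rw [Real.log_sqrt hxpos.le,
      Real.log_div (by positivity) (by positivity),
      Real.log_mul (ne_of_gt hDpos) (by positivity),
      Real.log_div (by positivity) (ne_of_gt hDpos),
      Real.log_pow, Real.log_pow, Real.log_inv, Real.log_pow]
    have hα2 : α * (1 / (1 + y)) ^ 2 / (-(1 / (1 + y) ^ 2)) = -α := by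
      rw [div_neg]
      field_simp
    rw [hα2, ← hγd]
    have hγd0 : γ * (d : ℝ) ≠ 0 := by positivity
    field_simp
    ring
  · rw [hv']; norm_num
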